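/- arXiv:1809.05716 — 2 statements merged into one kernel-verified Lean document; each statement's English description precedes it below -/
import Mathlib

section
/- Let V > 0 and let U : ℝ → ℝ be concave and differentiable on [0,1] with U'(0) < V. Let b(l) ∈ [0,1] and s(l) ∈ [0,1] be arbitrary sequences, and define sequences λ(l) ≥ 0 and r̄(l) ∈ [0,1] by: λ(0) ≤ V + 1; r̄(l) is a maximizer over α ∈ [0,1] of U(α) − λ(l)·α; and λ(l+1) = max(0, λ(l) + b(l)·(r̄(l) − s(l))). Then λ(l) ≤ V + 1 for every l ≥ 0. -/
/-- Boundedness of the dual (weight) variable in the C-NUM subgradient update: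
if `λ(0) ≤ V + 1`, `U` is concave and differentiable on `[0,1]` with `U'(0) < V`,
`r̄(l)` maximizes `U(α) − λ(l)·α` over `α ∈ [0,1]`, and
`λ(l+1) = [λ(l) + b(l)(r̄(l) − s(l))]⁺` with `b(l), s(l) ∈ [0,1]`,
then `λ(l) ≤ V + 1` for every `l`. -/
theorem stmt0 (V : ℝ) (hV : 0 < V)
    (U U' : ℝ → ℝ)
    (hconc : ConcaveOn ℝ (Set.Icc (0:ℝ) 1) U)
    (hderiv : ∀ y ∈ Set.Icc (0:ℝ) 1, HasDerivAt U (U' y) y)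
    (hU'0 : U' 0 < V)
    (b s lam rbar : ℕ → ℝ)
    (hb : ∀ l, b l ∈ Set.Icc (0:ℝ) 1)
    (hs : ∀ l, s l ∈ Set.Icc (0:ℝ) 1)
    (hlam_nonneg : ∀ l, 0 ≤ lam l)
    (hlam0 : lam 0 ≤ V + 1)
    (hrbar : ∀ l, rbar l ∈ Set.Icc (0:ℝ) 1)
    (hmax : ∀ l, ∀ α ∈ Set.Icc (0:ℝ) 1, U α - lam l * α ≤ U (rbar l) - lam l * rbar l)
    (hupd : ∀ l, lam (l + 1) = max 0 (lam l + b l * (rbar l - s l))) :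
    ∀ l, lam l ≤ V + 1 := by
  intro l
  induction l with
  | zero => exact hlam0
  | succ n ih =>
    rw [hupd n]
    rcases le_or_gt (lam n) V with hle | hgt
    · -- λ n ≤ V : increment is at most 1
      have hbn := hb n; have hsn := hs n; have hrn := hrbar n
      have h1 : b n * (rbar n - s n) ≤ 1 := by
        nlinarith [hbn.1, hbn.2, hsn.1, hsn.2, hrn.1, hrn.2]
      have : lam n + b n * (rbar n - s n) ≤ V + 1 := by linarith
      exact max_le (by positivity) this
    · -- λ n > V : show rbar n = 0, so λ does not increase
      have h0 : (0:ℝ) ∈ Set.Icc (0:ℝ) 1 := by norm_num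
      have hrn := hrbar n
      have hr0 : rbar n = 0 := by
        by_contra h
        have hrpos : 0 < rbar n := lt_of_le_of_ne hrn.1 (Ne.symm h)
        -- tangent line bound: U(rbar) - U(0) ≤ U'(0) * rbar
        have hslope : slope U 0 (rbar n) ≤ U' 0 :=
          hconc.slope_le_of_hasDerivAt h0 hrn hrpos (hderiv 0 h0)
        rw [slope_def_field, sub_zero, div_le_iff₀ hrpos] at hslope
        have hmax0 := hmax n 0 h0
        simp only [mul_zero, sub_zero] at hmax0
        nlinarith [hU'0]
      have : lam n + b n * (rbar n - s n) ≤ lam n := by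
        have hbn := hb n; have hsn := hs n
        nlinarith [hbn.1, hbn.2, hsn.1]
      exact max_le (by positivity) (by linarith)
end

section
/- Let A be a finite nonempty set, N ≥ 1, and for each i ∈ {1,…,N} let r_i : A → [0,1] and U_i : ℝ → ℝ. Fix b ≥ 0, weights λ_i ≥ 0, a probability vector p on A, values s_i ∈ [0,1], and r*_i ∈ [0,1] with r*_i ≤ Σ_a p(a)·r_i(a). Let r̄_i ∈ [0,1] maximize U_i(α) − λ_i·α over α ∈ [0,1]; define s_i(λ) = Σ_a p(a)·r_i(a), the subgradient error δ(λ) = max_{a∈A} Σ_i λ_i·r_i(a) − Σ_a p(a)·Σ_i λ_i·r_i(a), the sampling error e = Σ_i λ_i·(s_i(λ) − s_i), and the updated weights λ'_i = max(0, λ_i + b·(r̄_i − s_i)). Then Σ_i (λ'_i)² ≤ Σ_i λ_i² + N·b² + 2·b·e + 2·b·δ(λ) + 2·b·Σ_i (U_i(r̄_i) − U_i(r*_i)). -/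
/-- Per-frame Lyapunov drift inequality of the C-NUM analysis: with
`λ'_i = [λ_i + b(r̄_i − s_i)]⁺`, `s_i(λ) = Σ_a p(a)r_i(a)`,
`δ(λ) = max_a Σ_i λ_i r_i(a) − Σ_a p(a) Σ_i λ_i r_i(a)` and
`e = Σ_i λ_i(s_i(λ) − s_i)`, one has
`Σ_i (λ'_i)² ≤ Σ_i λ_i² + N·b² + 2b·e + 2b·δ(λ) + 2b·Σ_i (U_i(r̄_i) − U_i(r*_i))`. -/
theorem stmt9 {A : Type*} [Fintype A] [Nonempty A] (N : ℕ) (hN : 1 ≤ N)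
    (r : Fin N → A → ℝ) (hr : ∀ i a, r i a ∈ Set.Icc (0:ℝ) 1)
    (U : Fin N → ℝ → ℝ) (b : ℝ) (hb : 0 ≤ b)
    (lam : Fin N → ℝ) (hlam : ∀ i, 0 ≤ lam i)
    (p : A → ℝ) (hp : ∀ a, 0 ≤ p a) (hp1 : ∑ a, p a = 1)
    (s : Fin N → ℝ) (hs : ∀ i, s i ∈ Set.Icc (0:ℝ) 1)
    (rstar : Fin N → ℝ) (hrstar : ∀ i, rstar i ∈ Set.Icc (0:ℝ) 1)
    (hfeas : ∀ i, rstar i ≤ ∑ a, p a * r i a)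
    (rbar : Fin N → ℝ) (hrbar : ∀ i, rbar i ∈ Set.Icc (0:ℝ) 1)
    (hmax : ∀ i, ∀ α ∈ Set.Icc (0:ℝ) 1,
      U i α - lam i * α ≤ U i (rbar i) - lam i * rbar i) :
    ∑ i, (max 0 (lam i + b * (rbar i - s i))) ^ 2 ≤
      ∑ i, (lam i) ^ 2 + N * b ^ 2
        + 2 * b * (∑ i, lam i * ((∑ a, p a * r i a) - s i))
        + 2 * b * ((Finset.univ.sup' Finset.univ_nonempty
              fun a => ∑ i, lam i * r i a)
            - ∑ a, p a * ∑ i, lam i * r i a)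
        + 2 * b * (∑ i, (U i (rbar i) - U i (rstar i))) := by
  set M := Finset.univ.sup' Finset.univ_nonempty fun a => ∑ i, lam i * r i a with hM
  -- Step 1: pointwise quadratic bound
  have key : ∀ i, (max 0 (lam i + b * (rbar i - s i))) ^ 2 ≤
      lam i ^ 2 + b ^ 2 + 2 * b * (lam i * (rbar i - s i)) := by
    intro i
    set d := rbar i - s i with hd
    have hd1 : -1 ≤ d := by have := (hrbar i).1; have := (hs i).2; simp [hd]; linarith
    have hd2 : d ≤ 1 := by have := (hrbar i).2; have := (hs i).1; simp [hd]; linarith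
    rcases le_total (lam i + b * d) 0 with h | h
    · rw [max_eq_left h]
      nlinarith [sq_nonneg (lam i + b * d), mul_nonneg (mul_nonneg hb hb) (mul_nonneg (by linarith : (0:ℝ) ≤ 1 - d) (by linarith : (0:ℝ) ≤ 1 + d))]
    · rw [max_eq_right h]
      nlinarith [mul_nonneg (mul_nonneg hb hb) (mul_nonneg (by linarith : (0:ℝ) ≤ 1 - d) (by linarith : (0:ℝ) ≤ 1 + d))]
  have step1 : ∑ i, (max 0 (lam i + b * (rbar i - s i))) ^ 2 ≤
      ∑ i, lam i ^ 2 + N * b ^ 2 + 2 * b * ∑ i, lam i * (rbar i - s i) := by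
    calc ∑ i, (max 0 (lam i + b * (rbar i - s i))) ^ 2
        ≤ ∑ i, (lam i ^ 2 + b ^ 2 + 2 * b * (lam i * (rbar i - s i))) :=
          Finset.sum_le_sum fun i _ => key i
      _ = ∑ i, lam i ^ 2 + N * b ^ 2 + 2 * b * ∑ i, lam i * (rbar i - s i) := by
          simp [Finset.sum_add_distrib, Finset.mul_sum]
  -- swap of sums
  have swap : ∑ i, lam i * ∑ a, p a * r i a = ∑ a, p a * ∑ i, lam i * r i a := by
    simp_rw [Finset.mul_sum]
    rw [Finset.sum_comm]
    apply Finset.sum_congr rfl; intro a _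
    apply Finset.sum_congr rfl; intro i _
    ring
  -- convex combination ≤ max
  have hcomb : ∑ a, p a * ∑ i, lam i * r i a ≤ M := by
    calc ∑ a, p a * ∑ i, lam i * r i a ≤ ∑ a, p a * M := by
          apply Finset.sum_le_sum; intro a _
          exact mul_le_mul_of_nonneg_left
            (Finset.le_sup' (fun a => ∑ i, lam i * r i a) (Finset.mem_univ a)) (hp a)
      _ = M := by rw [← Finset.sum_mul, hp1, one_mul]
  -- Step 2: bound Σ λ_i r̄_i
  have hrb : ∑ i, lam i * rbar i ≤
      ∑ i, (U i (rbar i) - U i (rstar i)) + ∑ i, lam i * rstar i := by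
    rw [← Finset.sum_add_distrib]
    apply Finset.sum_le_sum; intro i _
    have := hmax i (rstar i) (hrstar i)
    linarith
  have hrs : ∑ i, lam i * rstar i ≤ ∑ i, lam i * ∑ a, p a * r i a :=
    Finset.sum_le_sum fun i _ => mul_le_mul_of_nonneg_left (hfeas i) (hlam i)
  -- combine
  have step2 : ∑ i, lam i * (rbar i - s i) ≤
      (∑ i, lam i * ((∑ a, p a * r i a) - s i))
      + (M - ∑ a, p a * ∑ i, lam i * r i a)
      + ∑ i, (U i (rbar i) - U i (rstar i)) := by
    have e1 : ∑ i, lam i * (rbar i - s i)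
        = ∑ i, lam i * rbar i - ∑ i, lam i * s i := by
      rw [← Finset.sum_sub_distrib]; apply Finset.sum_congr rfl; intros; ring
    have e2 : ∑ i, lam i * ((∑ a, p a * r i a) - s i)
        = ∑ i, lam i * ∑ a, p a * r i a - ∑ i, lam i * s i := by
      rw [← Finset.sum_sub_distrib]; apply Finset.sum_congr rfl; intros; ring
    rw [e1, e2, ← swap]
    have : ∑ i, lam i * ∑ a, p a * r i a ≤ M := swap ▸ hcomb
    linarith
  calc ∑ i, (max 0 (lam i + b * (rbar i - s i))) ^ 2
      ≤ ∑ i, lam i ^ 2 + N * b ^ 2 + 2 * b * ∑ i, lam i * (rbar i - s i) := step1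
    _ ≤ _ := by
        have := mul_le_mul_of_nonneg_left step2 (by linarith : (0:ℝ) ≤ 2 * b)
        linarith
end
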